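/- There exists exactly one formal power series f = Σ_{n≥0} κ_n q^n with real coefficients satisfying q·f² − (q³ + 2q − 1)·f − 1 = 0 in ℝ⟦q⟧; it has κ_0 = 1, and its coefficients satisfy limsup_{n→∞} |κ_n|^{1/n} = R_{√2}^{-1}, i.e. the radius of convergence of f equals R_{√2}. -/

import Mathlib

open PowerSeries Finset Complex Filter

/-- `R_{√2} = (1 + √2 − √(2√2 − 1))/2`. -/
noncomputable def Rsqrt2 : ℝ := (1 + Real.sqrt 2 - Real.sqrt (2 * Real.sqrt 2 - 1)) / 2

namespace QD


variable {A : Type*} [CommRing A]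

/-- the defining equation -/
def Eqn (f : PowerSeries A) : Prop :=
  X * f ^ 2 - (X ^ 3 + 2 * X - 1) * f - 1 = 0

lemma coeff_sq (f : PowerSeries A) (n : ℕ) :
    coeff n (f ^ 2) = ∑ i ∈ range (n + 1), coeff i f * coeff (n - i) f := by
  rw [sq, coeff_mul, Finset.Nat.sum_antidiagonal_eq_sum_range_succ_mk]

lemma coeff_zero_eqn (f : PowerSeries A) :
    coeff 0 (X * f ^ 2 - (X ^ 3 + 2 * X - 1) * f - 1) = coeff 0 f - 1 := by
  simp only [coeff_zero_eq_constantCoeff, map_sub, map_mul, map_add, map_pow, map_one,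
    constantCoeff_X]
  ring

lemma coeff_succ_eqn (f : PowerSeries A) (n : ℕ) :
    coeff (n + 1) (X * f ^ 2 - (X ^ 3 + 2 * X - 1) * f - 1)
      = coeff n (f ^ 2) - ((if 3 ≤ n + 1 then coeff (n + 1 - 3) f else 0)
          + 2 * coeff n f - coeff (n + 1) f) := by
  have h : (X ^ 3 + 2 * X - 1) * f = X ^ 3 * f + (X * f + X * f) - f := by ring
  rw [h]
  simp only [map_sub, map_add, coeff_succ_X_mul, coeff_X_pow_mul', coeff_one,
    Nat.succ_ne_zero, if_false]
  ring

theorem eqn_iff (f : PowerSeries A) :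
    Eqn f ↔ (coeff 0 f = 1 ∧ ∀ n : ℕ, coeff (n + 1) f =
      (if 3 ≤ n + 1 then coeff (n + 1 - 3) f else 0) + 2 * coeff n f
        - ∑ i ∈ range (n + 1), coeff i f * coeff (n - i) f) := by
  unfold Eqn
  rw [PowerSeries.ext_iff]
  simp only [map_zero]
  constructor
  · intro h
    have h0 := h 0
    rw [coeff_zero_eqn] at h0
    refine ⟨by linear_combination h0, fun n => ?_⟩
    have hn := h (n + 1)
    rw [coeff_succ_eqn, coeff_sq] at hn
    linear_combination hn
  · rintro ⟨h0, hrec⟩ n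
    cases n with
    | zero => rw [coeff_zero_eqn, h0]; ring
    | succ n =>
      rw [coeff_succ_eqn, coeff_sq]
      linear_combination hrec n

theorem eqn_unique (f g : PowerSeries A) (hf : Eqn f) (hg : Eqn g) : f = g := by
  rw [eqn_iff] at hf hg
  ext n
  induction n using Nat.strong_induction_on with
  | _ n ih =>
    match n with
    | 0 => rw [hf.1, hg.1]
    | (n + 1) =>
      have e : ∀ i ≤ n, coeff i f = coeff i g := fun i hi =>
        ih i (lt_of_le_of_lt hi n.lt_succ_self)
      rw [hf.2 n, hg.2 n]
      have h1 : (if 3 ≤ n + 1 then coeff (n + 1 - 3) f else 0)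
          = (if 3 ≤ n + 1 then coeff (n + 1 - 3) g else 0) := by
        split
        · exact e _ (by omega)
        · rfl
      have h3 : ∑ i ∈ range (n + 1), coeff i f * coeff (n - i) f
          = ∑ i ∈ range (n + 1), coeff i g * coeff (n - i) g :=
        Finset.sum_congr rfl fun i hi => by
          rw [e i (by simpa using Nat.lt_succ_iff.mp (mem_range.mp hi)),
            e (n - i) (by omega)]
      rw [h1, h3, e n le_rfl]

noncomputable def kap : ℕ → ℝ
  | 0 => 1
  | n + 1 => (if 3 ≤ n + 1 then kap (n + 1 - 3) else 0) + 2 * kap n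
      - ∑ i ∈ Finset.attach (range (n + 1)), kap i.1 * kap (n - i.1)
  decreasing_by
  · omega
  · omega
  · have := i.2; simp only [mem_range] at this; omega
  · omega

noncomputable def F : PowerSeries ℝ := mk kap

theorem eqn_F : Eqn F := by
  rw [eqn_iff]
  constructor
  · simp [F, kap]
  · intro n
    simp only [F, coeff_mk]
    rw [kap]
    congr 1
    exact Finset.sum_attach (range (n + 1)) (fun i => kap i * kap (n - i))



noncomputable def ub (a : ℂ) : ℕ → ℂ
  | 0 => 1
  | n + 1 => ub a n * (-a) * ((1/2 : ℂ) - n) / (n + 1)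

noncomputable def U (a : ℂ) : PowerSeries ℂ := mk (ub a)

lemma constantCoeff_U (a : ℂ) : constantCoeff (U a) = 1 := by
  simp [U, ← coeff_zero_eq_constantCoeff, ub]

lemma natcast_ne (n : ℕ) : ((n : ℂ) + 1) ≠ 0 := by
  intro h
  have h2 : ((n + 1 : ℕ) : ℂ) = 0 := by push_cast; linear_combination h
  exact Nat.cast_ne_zero.mpr (Nat.succ_ne_zero n) h2

lemma ode_u (a : ℂ) :
    2 * ((1 - C a * X) * (d⁄dX ℂ) (U a)) = -(C a * U a) := by
  have expand : 2 * ((1 - C a * X) * (d⁄dX ℂ) (U a))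
      = ((d⁄dX ℂ) (U a) - C a * (X * (d⁄dX ℂ) (U a)))
        + ((d⁄dX ℂ) (U a) - C a * (X * (d⁄dX ℂ) (U a))) := by ring
  rw [expand]
  ext n
  rw [map_add, map_sub, coeff_C_mul, map_neg, coeff_C_mul]
  cases n with
  | zero =>
    simp only [coeff_derivative, coeff_zero_eq_constantCoeff, map_mul, constantCoeff_X,
      zero_mul, mul_zero, U, coeff_mk]
    have hub1 : ub a 1 = -a/2 := by
      show ub a (0+1) = _
      rw [ub, ub]
      push_cast
      ring
    rw [hub1, show ub a 0 = 1 from by rw [ub]]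
    ring
  | succ n =>
    rw [coeff_succ_X_mul, coeff_derivative, coeff_derivative]
    simp only [U, coeff_mk]
    have hne : ((n:ℂ) + 1 + 1) ≠ 0 := by
      have := natcast_ne (n + 1)
      push_cast at this
      exact this
    have h2 : (ub a (n + 2)) * ((n : ℂ) + 1 + 1) = ub a (n + 1) * (-a) * ((1/2 : ℂ) - ((n:ℂ) + 1)) := by
      rw [show n + 2 = (n + 1) + 1 from rfl, ub]
      push_cast
      rw [div_mul_cancel₀ _ hne]
    push_cast at h2 ⊢
    linear_combination 2 * h2

lemma ode_zero (a : ℂ) (v : PowerSeries ℂ)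
    (h : (1 - C a * X) * (d⁄dX ℂ) v = -(C a * v))
    (h0 : constantCoeff v = 0) : v = 0 := by
  have expand : (1 - C a * X) * (d⁄dX ℂ) v
      = (d⁄dX ℂ) v - C a * (X * (d⁄dX ℂ) v) := by ring
  rw [expand] at h
  ext n
  rw [map_zero]
  induction n using Nat.strong_induction_on with
  | _ n ih =>
    cases n with
    | zero => rw [coeff_zero_eq_constantCoeff]; exact h0
    | succ n =>
      have hh := PowerSeries.ext_iff.mp h n
      have hX : coeff n (X * (d⁄dX ℂ) v) = 0 := by
        cases n with
        | zero => simp [coeff_zero_eq_constantCoeff, map_mul, constantCoeff_X]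
        | succ m =>
          rw [coeff_succ_X_mul, coeff_derivative, ih (m + 1) (by omega)]
          ring
      rw [map_sub, coeff_C_mul, coeff_derivative, map_neg, coeff_C_mul,
        ih n n.lt_succ_self, hX] at hh
      have h3 : coeff (n+1) v * ((n:ℂ) + 1) = 0 := by linear_combination hh
      rcases mul_eq_zero.mp h3 with h' | h'
      · exact h'
      · exact absurd h' (natcast_ne n)

lemma U_sq (a : ℂ) : U a ^ 2 = 1 - C a * X := by
  have hu := ode_u a
  have h0 : constantCoeff (U a ^ 2 - (1 - C a * X)) = 0 := by
    simp [map_pow, constantCoeff_U, map_mul, constantCoeff_X]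
  have dsq : (d⁄dX ℂ) (U a ^ 2) = U a * (d⁄dX ℂ) (U a) + U a * (d⁄dX ℂ) (U a) := by
    rw [sq, Derivation.leibniz, smul_eq_mul]
  have dlin : (d⁄dX ℂ) (1 - C a * X) = -(C a) := by
    rw [map_sub, Derivation.map_one_eq_zero, Derivation.leibniz, smul_eq_mul, smul_eq_mul,
      derivative_X, derivative_C]
    ring
  have hode : (1 - C a * X) * (d⁄dX ℂ) (U a ^ 2 - (1 - C a * X))
      = -(C a * (U a ^ 2 - (1 - C a * X))) := by
    rw [map_sub, dsq, dlin]
    linear_combination U a * hu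
  exact sub_eq_zero.mp (ode_zero a _ hode h0)

lemma ub_bound (a : ℂ) : ∀ n, ‖ub a n‖ ≤ ‖a‖ ^ n := by
  intro n
  induction n with
  | zero => simp [ub]
  | succ n ih =>
    rw [ub]
    have hhalf : ‖(1/2 : ℂ) - (n : ℂ)‖ ≤ (n : ℝ) + 1 := by
      have h1 : (1/2 : ℂ) - (n : ℂ) = (((1/2 - n : ℝ)) : ℂ) := by push_cast; ring
      rw [h1, Complex.norm_real, Real.norm_eq_abs, abs_le]
      have : (0:ℝ) ≤ (n:ℝ) := Nat.cast_nonneg n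
      constructor <;> linarith
    have hden : ‖((n : ℂ) + 1)‖ = (n : ℝ) + 1 := by
      have h1 : ((n : ℂ) + 1) = (((n + 1 : ℝ)) : ℂ) := by push_cast; ring
      rw [h1, Complex.norm_real, Real.norm_eq_abs, _root_.abs_of_nonneg (by positivity)]
    rw [norm_div, norm_mul, norm_mul, norm_neg, hden]
    have hpos : (0:ℝ) < (n : ℝ) + 1 := by positivity
    rw [div_le_iff₀ hpos]
    calc ‖ub a n‖ * ‖a‖ * ‖(1/2 : ℂ) - (n : ℂ)‖
        ≤ ‖a‖ ^ n * ‖a‖ * ((n : ℝ) + 1) := by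
          apply mul_le_mul (mul_le_mul_of_nonneg_right ih (norm_nonneg _)) hhalf
            (norm_nonneg _) (by positivity)
      _ = ‖a‖ ^ (n + 1) * ((n : ℝ) + 1) := by ring



noncomputable def sq2 : ℝ := Real.sqrt 2
noncomputable def s7 : ℝ := Real.sqrt 7
noncomputable def s3 : ℝ := Real.sqrt 3
noncomputable def wr : ℝ := Real.sqrt (8 * sq2 - 11)
noncomputable def vr : ℝ := Real.sqrt (2 * sq2 - 1)
noncomputable def al : ℝ := wr / 2
noncomputable def be : ℝ := -s7 / (2 * wr)

lemma hs2 : sq2 ^ 2 = 2 := Real.sq_sqrt (by norm_num)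
lemma hs2nn : 0 ≤ sq2 := Real.sqrt_nonneg 2
lemma hS2 : s7 ^ 2 = 7 := Real.sq_sqrt (by norm_num)
lemma hS2pos : 0 < s7 := Real.sqrt_pos.mpr (by norm_num)
lemma hT2 : s3 ^ 2 = 3 := Real.sq_sqrt (by norm_num)
lemma hsq2_ge_one : 1 ≤ sq2 := by nlinarith [hs2, hs2nn]
lemma hwarg : 0 < 8 * sq2 - 11 := by nlinarith [hs2, hs2nn]
lemma hw2 : wr ^ 2 = 8 * sq2 - 11 := Real.sq_sqrt hwarg.le
lemma hwpos : 0 < wr := Real.sqrt_pos.mpr hwarg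
lemma hvarg : 0 < 2 * sq2 - 1 := by nlinarith [hs2, hs2nn]
lemma hv2 : vr ^ 2 = 2 * sq2 - 1 := Real.sq_sqrt hvarg.le
lemma hvpos : 0 < vr := Real.sqrt_pos.mpr hvarg

lemma hR : Rsqrt2 = (1 + sq2 - vr) / 2 := rfl

lemma hRpos : 0 < Rsqrt2 := by
  rw [hR]
  nlinarith [hv2, hs2, hvpos, hs2nn]

lemma hRle1 : Rsqrt2 ≤ 1 := by
  rw [hR]
  nlinarith [hv2, hs2, hvpos, hsq2_ge_one]

noncomputable def Rinv : ℝ := (1 + sq2 + vr) / 2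

lemma hRinv : Rsqrt2⁻¹ = Rinv := by
  have h : Rinv * Rsqrt2 = 1 := by
    rw [hR, Rinv]
    linear_combination (1/4 : ℝ) * hs2 - (1/4 : ℝ) * hv2
  field_simp [hRpos.ne']
  linarith [h]


lemma hR_le_Rinv : Rsqrt2 ≤ Rsqrt2⁻¹ := by
  rw [hRinv, hR, Rinv]
  linarith [hvpos]

lemma hal2 : al ^ 2 = 2 * sq2 - 11 / 4 := by
  rw [al]
  linear_combination (1/4 : ℝ) * hw2

lemma hbe2 : be ^ 2 = 2 * sq2 + 11 / 4 := by
  rw [be]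
  field_simp [hwpos.ne']
  linear_combination (4:ℝ) * hS2 - (4*(8*sq2+11)) * hw2 - 256 * hs2

lemma hAB : al * be = -s7 / 4 := by
  rw [al, be]
  field_simp [hwpos.ne']
  ring

lemma hkey2 : (1 + sq2) * vr * wr = 2 * sq2 - 1 := by
  have hsq : ((1 + sq2) * vr * wr) ^ 2 = (2 * sq2 - 1) ^ 2 := by
    linear_combination (sq2 ^ 2 * wr ^ 2 + 2 * sq2 * wr ^ 2 + wr ^ 2) * hv2
      + (2 * sq2 ^ 3 + 3 * sq2 ^ 2 - 1) * hw2 + (16 * sq2 ^ 2 + 2 * sq2 - 5) * hs2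
  have hne : (0:ℝ) < 2 * sq2 - 1 := hvarg
  have hpos : 0 ≤ (1 + sq2) * vr * wr := by
    apply mul_nonneg (mul_nonneg (by linarith [hs2nn]) hvpos.le) hwpos.le
  have hfac : ((1 + sq2) * vr * wr - (2 * sq2 - 1)) * ((1 + sq2) * vr * wr + (2 * sq2 - 1)) = 0 := by
    linear_combination hsq
  rcases mul_eq_zero.mp hfac with h | h
  · linarith
  · linarith

lemma hkey3 : al = s7 * be + 2 * (1 + sq2) * vr := by
  rw [al, be]
  field_simp [hwpos.ne']
  linear_combination hw2 + hS2 - 4 * hkey2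

lemma sq_inj {x y : ℝ} (hx : 0 ≤ x) (hy : 0 ≤ y) (h : x ^ 2 = y ^ 2) : x = y := by
  have hf : (x - y) * (x + y) = 0 := by linear_combination h
  rcases mul_eq_zero.mp hf with h' | h'
  · linarith
  · nlinarith

noncomputable def t1 : ℂ := ((-1/2 : ℝ) : ℂ) + ((s7/2 : ℝ) : ℂ) * Complex.I
noncomputable def t2 : ℂ := -1 - t1
noncomputable def x1 : ℝ := (-1/2 + al) / 2
noncomputable def y1 : ℝ := (s7/2 + be) / 2
noncomputable def x2 : ℝ := (-1/2 - al) / 2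
noncomputable def y2 : ℝ := (s7/2 - be) / 2
noncomputable def a1 : ℂ := (x1 : ℂ) + (y1 : ℂ) * Complex.I
noncomputable def a2 : ℂ := (x2 : ℂ) + (y2 : ℂ) * Complex.I
noncomputable def a3 : ℂ := (starRingEnd ℂ) a1
noncomputable def a4 : ℂ := (starRingEnd ℂ) a2
noncomputable def e1 : ℂ := ((1/2 : ℝ) : ℂ) + ((s3/2 : ℝ) : ℂ) * Complex.I
noncomputable def e2 : ℂ := ((1/2 : ℝ) : ℂ) - ((s3/2 : ℝ) : ℂ) * Complex.I

lemma hA2c : ((al : ℂ)) ^ 2 = ((be : ℂ)) ^ 2 - 11/2 := by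
  have h : al ^ 2 = be ^ 2 - 11/2 := by linarith [hal2, hbe2]
  have h2 := congrArg (fun r : ℝ => (r : ℂ)) h
  push_cast at h2
  exact h2

lemma hABc : (al : ℂ) * (be : ℂ) = -((s7 : ℂ))/4 := by
  have h2 := congrArg (fun r : ℝ => (r : ℂ)) hAB
  push_cast at h2
  exact h2

lemma hS2c : ((s7 : ℂ)) ^ 2 = 7 := by
  have h2 := congrArg (fun r : ℝ => (r : ℂ)) hS2
  push_cast at h2
  exact h2

lemma hT2c : ((s3 : ℂ)) ^ 2 = 3 := by
  have h2 := congrArg (fun r : ℝ => (r : ℂ)) hT2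
  push_cast at h2
  exact h2

lemma hI2 : (Complex.I) ^ 2 = -1 := Complex.I_sq

lemma ha12sum : a1 + a2 = t1 := by
  rw [a1, a2, t1, x1, y1, x2, y2]
  push_cast
  ring

lemma ha12prod : a1 * a2 = 1 := by
  rw [a1, a2, x1, y1, x2, y2]
  push_cast
  linear_combination (-1/4 : ℂ) * hA2c + (-(Complex.I)/2) * hABc
    + ((Complex.I)^2/16) * hS2c + (-((be : ℂ))^2/4 + 7/16) * hI2

lemma ht0 : t1 ^ 2 + t1 + 2 = 0 := by
  rw [t1]
  push_cast
  linear_combination ((Complex.I)^2/4) * hS2c + (7/4) * hI2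

lemma he12sum : e1 + e2 = 1 := by rw [e1, e2]; push_cast; ring

lemma he12prod : e1 * e2 = 1 := by
  rw [e1, e2]
  push_cast
  linear_combination (-(Complex.I)^2/4) * hT2c + (-3/4) * hI2

lemma ht1conj : (starRingEnd ℂ) t1 = t2 := by
  rw [t1, t2, t1]
  simp only [map_add, map_mul, Complex.conj_ofReal, Complex.conj_I]
  push_cast
  ring

lemma ha34sum : a3 + a4 = t2 := by rw [a3, a4, ← map_add, ha12sum, ht1conj]

lemma ha34prod : a3 * a4 = 1 := by rw [a3, a4, ← map_mul, ha12prod, map_one]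

lemma ht12sum : t1 + t2 = -1 := by rw [t2]; ring

lemma ht12prod : t1 * t2 = 2 := by rw [t2]; linear_combination -ht0

lemma hq0 : a1 ^ 2 - t1 * a1 + 1 = 0 := by linear_combination a1 * ha12sum - ha12prod

lemma hDq0 : a1 ^ 6 + 4 * a1 ^ 4 - 2 * a1 ^ 3 + 4 * a1 ^ 2 + 1 = 0 := by
  linear_combination (a1^4 + a1^3*t1 + a1^2*t1^2 + 3*a1^2 + a1*t1^3 + 2*a1*t1 - 2*a1
    + t1^4 + t1^2 - 2*t1 + 1) * hq0 + (a1*t1^3 - a1*t1^2 - a1*t1 + a1 - t1^2 + t1) * ht0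

lemma hD'q0 : 6 * a1 ^ 5 + 16 * a1 ^ 3 - 6 * a1 ^ 2 + 8 * a1
    = (a1 ^ 2 - a1 + 1) * (a1 ^ 2 - t2 * a1 + 1) * (2 * a1 - t1) := by
  rw [t2]
  linear_combination (4*a1^3 + 3*a1^2*t1 + 4*a1*t1^2 + 2*a1*t1 + 10*a1 + 4*t1^3 + t1^2
    + 6*t1 - 6) * hq0 + (4*a1*t1^2 - 3*a1*t1 - 2*a1 - 4*t1 + 3) * ht0

lemma hf1 : a1 ^ 2 - a1 + 1 = (t1 - 1) * a1 := by linear_combination hq0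

lemma hf2 : a1 ^ 2 - t2 * a1 + 1 = (2 * t1 + 1) * a1 := by rw [t2]; linear_combination hq0

lemma ha1ne : a1 ≠ 0 := by
  intro h
  have h2 := hq0
  rw [h] at h2
  simp at h2

lemma ht1im : t1.im = s7 / 2 := by rw [t1]; simp

lemma ht1ne1 : t1 - 1 ≠ 0 := by
  intro h
  have h2 : (t1 - 1).im = 0 := by rw [h]; simp
  rw [Complex.sub_im, ht1im] at h2
  simp at h2
  linarith [hS2pos]

lemma h2t1ne : 2 * t1 + 1 ≠ 0 := by
  intro h
  have h2 : (2 * t1 + 1).im = 0 := by rw [h]; simp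
  have h3 : (2 * t1 + 1).im = 2 * t1.im := by simp
  rw [h3, ht1im] at h2
  have := hS2pos
  linarith

lemma hbene : be ≠ 0 := by
  rw [be]
  apply div_ne_zero (neg_ne_zero.mpr hS2pos.ne')
  have := hwpos
  intro h
  linarith

lemma h2a1t1ne : 2 * a1 - t1 ≠ 0 := by
  intro h
  have h2 : (2 * a1 - t1).im = 0 := by rw [h]; simp
  have h3 : a1.im = y1 := by rw [a1]; simp
  have h4 : (2 * a1 - t1).im = 2 * a1.im - t1.im := by simp
  rw [h4, h3, ht1im, y1] at h2
  apply hbene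
  linarith

lemma hD'ne : 6 * a1 ^ 5 + 16 * a1 ^ 3 - 6 * a1 ^ 2 + 8 * a1 ≠ 0 := by
  rw [hD'q0, hf1, hf2]
  exact mul_ne_zero (mul_ne_zero (mul_ne_zero ht1ne1 ha1ne) (mul_ne_zero h2t1ne ha1ne)) h2a1t1ne

lemma hx1y1 : x1 ^ 2 + y1 ^ 2 = Rsqrt2 ^ 2 := by
  rw [x1, y1, hR]
  linear_combination (1/4 : ℝ) * hal2 + (-1/4 : ℝ) * hkey3 + (1/4 : ℝ) * hbe2
    + (1/16 : ℝ) * hS2 + (-1/4 : ℝ) * hv2 + (-1/4 : ℝ) * hs2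

lemma hx2y2 : x2 ^ 2 + y2 ^ 2 = Rinv ^ 2 := by
  rw [x2, y2, Rinv]
  linear_combination (1/4 : ℝ) * hal2 + (1/4 : ℝ) * hkey3 + (1/4 : ℝ) * hbe2
    + (1/16 : ℝ) * hS2 + (-1/4 : ℝ) * hv2 + (-1/4 : ℝ) * hs2

lemma norm_sq_eq (z : ℂ) : ‖z‖ ^ 2 = z.re ^ 2 + z.im ^ 2 := by
  rw [Complex.sq_norm, Complex.normSq_apply]
  ring

lemma na1 : ‖a1‖ = Rsqrt2 := by
  apply sq_inj (norm_nonneg _) hRpos.le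
  rw [norm_sq_eq]
  have h3 : a1.re = x1 := by rw [a1]; simp
  have h4 : a1.im = y1 := by rw [a1]; simp
  rw [h3, h4, hx1y1]

lemma hRinvpos : 0 < Rinv := by
  rw [Rinv]
  linarith [hvpos, hs2nn]

lemma na2 : ‖a2‖ = Rsqrt2⁻¹ := by
  rw [hRinv]
  apply sq_inj (norm_nonneg _) hRinvpos.le
  rw [norm_sq_eq]
  have h3 : a2.re = x2 := by rw [a2]; simp
  have h4 : a2.im = y2 := by rw [a2]; simp
  rw [h3, h4, hx2y2]

lemma na3 : ‖a3‖ = Rsqrt2 := by rw [a3, RCLike.norm_conj, na1]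

lemma na4 : ‖a4‖ = Rsqrt2⁻¹ := by rw [a4, RCLike.norm_conj, na2]

lemma ne1 : ‖e1‖ = 1 := by
  apply sq_inj (norm_nonneg _) zero_le_one
  rw [norm_sq_eq]
  have h3 : e1.re = 1/2 := by rw [e1]; simp
  have h4 : e1.im = s3/2 := by rw [e1]; simp
  rw [h3, h4]
  linear_combination (1/4 : ℝ) * hT2

lemma ne2 : ‖e2‖ = 1 := by
  apply sq_inj (norm_nonneg _) zero_le_one
  rw [norm_sq_eq]
  have h3 : e2.re = 1/2 := by rw [e2]; simp
  have h4 : e2.im = -(s3/2) := by rw [e2]; simp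
  rw [h3, h4]
  linear_combination (1/4 : ℝ) * hT2


noncomputable def Fc : PowerSeries ℂ := PowerSeries.map Complex.ofRealHom F

lemma eqn_Fc : Eqn Fc := by
  have h := congrArg (PowerSeries.map (Complex.ofRealHom : ℝ →+* ℂ)) eqn_F
  unfold Eqn at h ⊢
  simpa only [map_sub, map_mul, map_pow, map_add, map_one, PowerSeries.map_X,
    map_ofNat, map_zero, Fc] using h

noncomputable def g : PowerSeries ℂ := 2 * X * Fc - (X ^ 3 + 2 * X - 1)

lemma hg2 : g ^ 2 = (X ^ 3 + 2 * X - 1 : PowerSeries ℂ) ^ 2 + 4 * X := by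
  have h := eqn_Fc
  unfold Eqn at h
  rw [g]
  linear_combination (4 * (X : PowerSeries ℂ)) * h

noncomputable def W : PowerSeries ℂ := U e1 * U e2 * U a1 * U a2 * U a3 * U a4

lemma hUq1 : (U e1 * U e2) ^ 2 = 1 - X + X ^ 2 := by
  rw [mul_pow, U_sq, U_sq]
  have hC1 : C e1 * C e2 = 1 := by rw [← map_mul, he12prod, map_one]
  have hC2 : C e1 + C e2 = 1 := by rw [← map_add, he12sum, map_one]
  linear_combination (X : PowerSeries ℂ) ^ 2 * hC1 - (X : PowerSeries ℂ) * hC2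

lemma hUq2 : (U a1 * U a2) ^ 2 = 1 - C t1 * X + X ^ 2 := by
  rw [mul_pow, U_sq, U_sq]
  have hC1 : C a1 * C a2 = 1 := by rw [← map_mul, ha12prod, map_one]
  have hC2 : C a1 + C a2 = C t1 := by rw [← map_add, ha12sum]
  linear_combination (X : PowerSeries ℂ) ^ 2 * hC1 - (X : PowerSeries ℂ) * hC2

lemma hUq3 : (U a3 * U a4) ^ 2 = 1 - C t2 * X + X ^ 2 := by
  rw [mul_pow, U_sq, U_sq]
  have hC1 : C a3 * C a4 = 1 := by rw [← map_mul, ha34prod, map_one]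
  have hC2 : C a3 + C a4 = C t2 := by rw [← map_add, ha34sum]
  linear_combination (X : PowerSeries ℂ) ^ 2 * hC1 - (X : PowerSeries ℂ) * hC2

lemma hW2 : W ^ 2 = (X ^ 3 + 2 * X - 1 : PowerSeries ℂ) ^ 2 + 4 * X := by
  have hass : W ^ 2 = ((U e1 * U e2) ^ 2) * ((U a1 * U a2) ^ 2) * ((U a3 * U a4) ^ 2) := by
    rw [W]; ring
  rw [hass, hUq1, hUq2, hUq3]
  have hCt1 : C t1 + C t2 = -1 := by rw [← map_add, ht12sum, map_neg, map_one]
  have hCt2 : C t1 * C t2 = 2 := by rw [← map_mul, ht12prod, map_ofNat]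
  linear_combination ((1 - (X : PowerSeries ℂ) + X ^ 2) * (-X - X ^ 3)) * hCt1
    + ((1 - (X : PowerSeries ℂ) + X ^ 2) * X ^ 2) * hCt2

lemma hcW : constantCoeff W = 1 := by
  rw [W]
  simp [map_mul, constantCoeff_U]

lemma hcg : constantCoeff g = 1 := by
  rw [g]
  simp [map_sub, map_mul, map_add, map_pow, constantCoeff_X, map_one, map_ofNat]

lemma hgW : W = g := by
  have hfac : (W - g) * (W + g) = 0 := by linear_combination hW2 - hg2
  rcases mul_eq_zero.mp hfac with h | h
  · exact sub_eq_zero.mp h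
  · exfalso
    have h2 : constantCoeff (W + g) = 0 := by rw [h]; simp
    rw [map_add, hcW, hcg] at h2
    norm_num at h2

lemma mul_coeff_bound {x y : PowerSeries ℂ} {A c : ℝ} {j : ℕ} (hA : 0 ≤ A) (hc : 0 ≤ c)
    (hx : ∀ n, ‖coeff n x‖ ≤ A * ((n : ℝ) + 1) ^ j * c ^ n)
    (hy : ∀ n, ‖coeff n y‖ ≤ c ^ n) :
    ∀ n, ‖coeff n (x * y)‖ ≤ A * ((n : ℝ) + 1) ^ (j + 1) * c ^ n := by
  intro n
  rw [coeff_mul]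
  refine (norm_sum_le _ _).trans ?_
  have hterm : ∀ p ∈ Finset.HasAntidiagonal.antidiagonal n,
      ‖coeff p.1 x * coeff p.2 y‖ ≤ A * ((n : ℝ) + 1) ^ j * c ^ n := by
    intro p hp
    have hpn := Finset.HasAntidiagonal.mem_antidiagonal.mp hp
    rw [norm_mul]
    calc ‖coeff p.1 x‖ * ‖coeff p.2 y‖
        ≤ (A * ((p.1 : ℝ) + 1) ^ j * c ^ p.1) * c ^ p.2 := by
          apply mul_le_mul (hx p.1) (hy p.2) (norm_nonneg _)
          positivity
      _ = A * ((p.1 : ℝ) + 1) ^ j * c ^ n := by rw [mul_assoc, ← pow_add, hpn]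
      _ ≤ A * ((n : ℝ) + 1) ^ j * c ^ n := by
          apply mul_le_mul_of_nonneg_right (mul_le_mul_of_nonneg_left ?_ hA) (by positivity)
          apply pow_le_pow_left₀ (by positivity)
          have hpn' : p.1 ≤ n := by omega
          have : (p.1 : ℝ) ≤ (n : ℝ) := Nat.cast_le.mpr hpn'
          linarith
  calc ∑ p ∈ Finset.HasAntidiagonal.antidiagonal n, ‖coeff p.1 x * coeff p.2 y‖
      ≤ (Finset.HasAntidiagonal.antidiagonal n).card • (A * ((n : ℝ) + 1) ^ j * c ^ n) :=
        Finset.sum_le_card_nsmul _ _ _ hterm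
    _ = A * ((n : ℝ) + 1) ^ (j + 1) * c ^ n := by
        rw [Finset.Nat.card_antidiagonal, nsmul_eq_mul]
        push_cast
        ring

lemma bU {a : ℂ} (ha : ‖a‖ ≤ Rsqrt2⁻¹) : ∀ n, ‖coeff n (U a)‖ ≤ (Rsqrt2⁻¹) ^ n := by
  intro n
  have h1 : coeff n (U a) = ub a n := by simp [U]
  rw [h1]
  exact (ub_bound a n).trans (pow_le_pow_left₀ (norm_nonneg a) ha n)

lemma hone_le_Rinv : 1 ≤ Rsqrt2⁻¹ := by
  rw [hRinv, Rinv]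
  linarith [hsq2_ge_one, hvpos]

lemma hRinv_nonneg : 0 ≤ Rsqrt2⁻¹ := by linarith [hone_le_Rinv]

lemma bW : ∀ n, ‖coeff n W‖ ≤ ((n : ℝ) + 1) ^ 5 * (Rsqrt2⁻¹) ^ n := by
  have c0 := hRinv_nonneg
  have b1 := bU (ne1.le.trans hone_le_Rinv)
  have b2 := bU (ne2.le.trans hone_le_Rinv)
  have b3 := bU (na1.le.trans hR_le_Rinv)
  have b4 := bU (le_of_eq na2)
  have b5 := bU (na3.le.trans hR_le_Rinv)
  have b6 := bU (le_of_eq na4)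
  have h0 : ∀ n, ‖coeff n (U e1)‖ ≤ 1 * ((n : ℝ) + 1) ^ 0 * (Rsqrt2⁻¹) ^ n := by
    intro n; simpa using b1 n
  have h1 := mul_coeff_bound zero_le_one c0 h0 b2
  have h2 := mul_coeff_bound zero_le_one c0 h1 b3
  have h3 := mul_coeff_bound zero_le_one c0 h2 b4
  have h4 := mul_coeff_bound zero_le_one c0 h3 b5
  have h5 := mul_coeff_bound zero_le_one c0 h4 b6
  intro n
  have := h5 n
  rw [W]
  calc ‖coeff n (U e1 * U e2 * U a1 * U a2 * U a3 * U a4)‖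
      ≤ 1 * ((n : ℝ) + 1) ^ 5 * (Rsqrt2⁻¹) ^ n := this
    _ = ((n : ℝ) + 1) ^ 5 * (Rsqrt2⁻¹) ^ n := by ring

lemma coeff_Fc (n : ℕ) : coeff n Fc = ((kap n : ℝ) : ℂ) := by
  rw [Fc, PowerSeries.coeff_map]
  simp [F]

lemma norm_coeff_Fc (n : ℕ) : ‖coeff n Fc‖ = |kap n| := by
  rw [coeff_Fc, Complex.norm_real, Real.norm_eq_abs]

lemma coeff_g_succ (n : ℕ) (hn : 3 ≤ n) : coeff (n + 1) g = 2 * coeff n Fc := by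
  have hexp : g = (X * Fc + X * Fc) - (X ^ 3 + (X + X) - 1) := by rw [g]; ring
  have e3 : n + 1 ≠ 3 := by omega
  have e1' : n + 1 ≠ 1 := by omega
  have e0 : n + 1 ≠ 0 := by omega
  rw [hexp]
  simp only [map_sub, map_add, coeff_succ_X_mul, coeff_X_pow, PowerSeries.coeff_X,
    coeff_one, if_neg e3, if_neg e1', if_neg e0]
  ring

lemma bKap (n : ℕ) (hn : 3 ≤ n) : |kap n| ≤ ((n : ℝ) + 2) ^ 5 * (Rsqrt2⁻¹) ^ (n + 1) := by
  have h1 : coeff (n + 1) g = 2 * coeff n Fc := coeff_g_succ n hn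
  have h2 := bW (n + 1)
  rw [hgW, h1] at h2
  rw [norm_mul, norm_coeff_Fc] at h2
  have h3 : ‖(2 : ℂ)‖ = 2 := by norm_num
  rw [h3] at h2
  push_cast at h2 ⊢
  nlinarith [abs_nonneg (kap n), pow_nonneg hRinv_nonneg (n + 1),
    pow_nonneg (by positivity : (0:ℝ) ≤ (n : ℝ) + 1 + 1) 5]

/-! ### Part 5: evaluation at the singular point -/

lemma hgg : g * g = (X ^ 3 + 2 * X - 1 : PowerSeries ℂ) ^ 2 + 4 * X := by
  rw [← sq]; exact hg2

lemma hpolyD : ((X ^ 3 + 2 * X - 1 : PowerSeries ℂ)) ^ 2 + 4 * X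
    = 1 + C 4 * X ^ 2 + C (-2) * X ^ 3 + C 4 * X ^ 4 + X ^ 6 := by
  have h4 : (C (4:ℂ)) = 4 := map_ofNat _ 4
  have h2 : (C (-2:ℂ)) = -2 := by rw [map_neg]; rw [map_ofNat]
  rw [h4, h2]
  ring

lemma coeff_D (n : ℕ) : coeff n ((X ^ 3 + 2 * X - 1 : PowerSeries ℂ) ^ 2 + 4 * X)
    = (if n = 0 then 1 else 0) + 4 * (if n = 2 then 1 else 0) + (-2) * (if n = 3 then 1 else 0)
      + 4 * (if n = 4 then 1 else 0) + (if n = 6 then 1 else 0) := by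
  rw [hpolyD]
  simp only [map_add, coeff_C_mul, coeff_X_pow, coeff_one]

lemma coeff_D_big (n : ℕ) (hn : 7 ≤ n) :
    coeff n ((X ^ 3 + 2 * X - 1 : PowerSeries ℂ) ^ 2 + 4 * X) = 0 := by
  rw [coeff_D]
  have h0 : n ≠ 0 := by omega
  have h2 : n ≠ 2 := by omega
  have h3 : n ≠ 3 := by omega
  have h4 : n ≠ 4 := by omega
  have h6 : n ≠ 6 := by omega
  simp [h0, h2, h3, h4, h6]

lemma tsum_poly (φ : PowerSeries ℂ) (z : ℂ) (m : ℕ) (h : ∀ n, m ≤ n → coeff n φ = 0) :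
    ∑' n : ℕ, coeff n φ * z ^ n = ∑ n ∈ range m, coeff n φ * z ^ n := by
  apply tsum_eq_sum
  intro n hn
  rw [h n (by simpa using hn)]
  ring

lemma hvalD : ∑' n : ℕ, coeff n ((X ^ 3 + 2 * X - 1 : PowerSeries ℂ) ^ 2 + 4 * X) * a1 ^ n
    = 0 := by
  rw [tsum_poly _ _ 7 coeff_D_big]
  simp only [Finset.sum_range_succ, Finset.sum_range_zero, coeff_D]
  norm_num
  linear_combination hDq0

lemma hvalD' : ∑' n : ℕ, coeff n (derivativeFun ((X ^ 3 + 2 * X - 1 : PowerSeries ℂ) ^ 2 + 4 * X)) * a1 ^ n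
    = 6 * a1 ^ 5 + 16 * a1 ^ 3 - 6 * a1 ^ 2 + 8 * a1 := by
  have hc : ∀ n, coeff n (derivativeFun ((X ^ 3 + 2 * X - 1 : PowerSeries ℂ) ^ 2 + 4 * X))
      = coeff (n+1) ((X ^ 3 + 2 * X - 1 : PowerSeries ℂ) ^ 2 + 4 * X) * ((n:ℂ)+1) :=
    fun n => coeff_derivativeFun _ n
  rw [tsum_poly _ _ 6 (fun n hn => by rw [hc, coeff_D_big (n+1) (by omega)]; ring)]
  simp only [Finset.sum_range_succ, Finset.sum_range_zero, hc, coeff_D]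
  norm_num
  ring

lemma cauchy_eval {x y : PowerSeries ℂ} {z : ℂ}
    (hx : Summable fun n : ℕ => ‖coeff n x * z ^ n‖)
    (hy : Summable fun n : ℕ => ‖coeff n y * z ^ n‖) :
    (∑' n : ℕ, coeff n x * z ^ n) * (∑' n : ℕ, coeff n y * z ^ n)
      = ∑' n : ℕ, coeff n (x * y) * z ^ n := by
  rw [tsum_mul_tsum_eq_tsum_sum_antidiagonal_of_summable_norm hx hy]
  congr 1
  funext n
  rw [coeff_mul, Finset.sum_mul]
  apply Finset.sum_congr rfl
  intro p hp
  have hpn := Finset.HasAntidiagonal.mem_antidiagonal.mp hp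
  rw [← hpn, pow_add]
  ring

lemma no_fast_decay {c : ℝ} (hc0 : 0 < c) (hcR : c < Rsqrt2⁻¹) :
    ¬ (∀ᶠ n in atTop, |kap n| ≤ c ^ n) := by
  intro H
  have hr0 : 0 < c * Rsqrt2 := mul_pos hc0 hRpos
  have hr1 : c * Rsqrt2 < 1 := by
    have h := mul_lt_mul_of_pos_right hcR hRpos
    rwa [inv_mul_cancel₀ hRpos.ne'] at h
  have H2 : ∀ᶠ n in atTop, ‖coeff n g‖ ≤ (2 / c) * c ^ n := by
    obtain ⟨N, hN⟩ := eventually_atTop.mp H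
    refine eventually_atTop.mpr ⟨N + 4, fun n hn => ?_⟩
    obtain ⟨m, rfl⟩ : ∃ m, n = m + 1 := ⟨n - 1, by omega⟩
    rw [coeff_g_succ m (by omega), norm_mul, norm_coeff_Fc]
    have h1 : |kap m| ≤ c ^ m := hN m (by omega)
    have h2 : ‖(2:ℂ)‖ = 2 := by norm_num
    rw [h2]
    have heq : (2 / c) * c ^ (m + 1) = 2 * c ^ m := by
      rw [pow_succ]
      field_simp
    rw [heq]
    linarith
  have hA : Summable (fun n : ℕ => ‖coeff n g * a1 ^ n‖) := by
    apply Summable.of_norm_bounded_eventually_nat (g := fun n => (2 / c) * (c * Rsqrt2) ^ n)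
      ((summable_geometric_of_lt_one hr0.le hr1).mul_left _)
    filter_upwards [H2] with n hn
    rw [norm_norm, norm_mul, norm_pow, na1]
    calc ‖coeff n g‖ * Rsqrt2 ^ n ≤ ((2 / c) * c ^ n) * Rsqrt2 ^ n :=
          mul_le_mul_of_nonneg_right hn (pow_nonneg hRpos.le n)
      _ = (2 / c) * (c * Rsqrt2) ^ n := by rw [mul_pow]; ring
  have hB : Summable (fun n : ℕ => ‖coeff n (derivativeFun g) * a1 ^ n‖) := by
    apply Summable.of_norm_bounded_eventually_nat
      (g := fun n => ((2 / c) * c) * (((n:ℝ) + 1) * (c * Rsqrt2) ^ n))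
    · apply Summable.mul_left
      have h1 := summable_pow_mul_geometric_of_norm_lt_one (R := ℝ) 1
        (r := c * Rsqrt2) (by rw [Real.norm_eq_abs, _root_.abs_of_pos hr0]; exact hr1)
      have h2 := summable_geometric_of_lt_one hr0.le hr1
      apply (h1.add h2).congr
      intro n
      push_cast
      ring
    · obtain ⟨N, hN⟩ := eventually_atTop.mp H2
      refine eventually_atTop.mpr ⟨N, fun n hn => ?_⟩
      have hb := hN (n + 1) (by omega)
      rw [norm_norm, norm_mul, norm_pow, na1,
        (show coeff n g.derivativeFun = coeff (n + 1) g * ((n : ℂ) + 1) from coeff_derivative g n), norm_mul]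
      have hnn : ‖((n : ℂ) + 1)‖ = (n : ℝ) + 1 := by
        have h1 : ((n : ℂ) + 1) = (((n + 1 : ℝ)) : ℂ) := by push_cast; ring
        rw [h1, Complex.norm_real, Real.norm_eq_abs, _root_.abs_of_nonneg (by positivity)]
      rw [hnn]
      calc ‖coeff (n+1) g‖ * ((n:ℝ) + 1) * Rsqrt2 ^ n
          ≤ ((2 / c) * c ^ (n+1)) * ((n:ℝ) + 1) * Rsqrt2 ^ n := by
            apply mul_le_mul_of_nonneg_right (mul_le_mul_of_nonneg_right hb (by positivity))
              (pow_nonneg hRpos.le n)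
        _ = ((2 / c) * c) * (((n:ℝ) + 1) * (c * Rsqrt2) ^ n) := by
            rw [mul_pow, pow_succ]; ring
  have hS1 : (∑' n : ℕ, coeff n g * a1 ^ n) = 0 := by
    have hcp := cauchy_eval hA hA
    rw [hgg, hvalD] at hcp
    exact mul_self_eq_zero.mp hcp
  have hder : derivativeFun ((X ^ 3 + 2 * X - 1 : PowerSeries ℂ) ^ 2 + 4 * X)
      = g * derivativeFun g + g * derivativeFun g := by
    rw [← hgg, derivativeFun_mul]
    simp only [smul_eq_mul]
  have hcp2 := cauchy_eval hB hA
  have hfinal : (6 * a1 ^ 5 + 16 * a1 ^ 3 - 6 * a1 ^ 2 + 8 * a1) = 0 := by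
    calc (6 * a1 ^ 5 + 16 * a1 ^ 3 - 6 * a1 ^ 2 + 8 * a1)
        = ∑' n : ℕ, coeff n (derivativeFun ((X ^ 3 + 2 * X - 1 : PowerSeries ℂ) ^ 2 + 4 * X)) * a1 ^ n := hvalD'.symm
      _ = ∑' n : ℕ, 2 * (coeff n (derivativeFun g * g) * a1 ^ n) := by
          congr 1
          funext n
          rw [hder, map_add]
          rw [show (g * derivativeFun g) = derivativeFun g * g from mul_comm _ _]
          ring
      _ = 2 * ∑' n : ℕ, coeff n (derivativeFun g * g) * a1 ^ n := tsum_mul_left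
      _ = 2 * ((∑' n : ℕ, coeff n (derivativeFun g) * a1 ^ n)
            * (∑' n : ℕ, coeff n g * a1 ^ n)) := by rw [hcp2]
      _ = 0 := by rw [hS1]; ring
  exact hD'ne hfinal

/-! ### Part 6: limsup -/

lemma hUp {c : ℝ} (hc : Rsqrt2⁻¹ < c) : ∀ᶠ n in atTop, |kap n| ≤ c ^ n := by
  have hρ : 1 < Rsqrt2 * c := by
    have h := mul_lt_mul_of_pos_left hc hRpos
    rwa [mul_inv_cancel₀ hRpos.ne'] at h
  have hT := tendsto_pow_const_div_const_pow_of_one_lt 6 hρ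
  have hev1 := hT.eventually_lt_const hRpos
  filter_upwards [hev1, eventually_ge_atTop 32] with n h1 h2
  have h3 : (3:ℕ) ≤ n := by omega
  have hb := bKap n h3
  have hρpos : (0:ℝ) < (Rsqrt2 * c) ^ n := pow_pos (by linarith) n
  have hn6 : ((n:ℝ)) ^ 6 < Rsqrt2 * (Rsqrt2 * c) ^ n := (div_lt_iff₀ hρpos).mp h1
  have h2' : (32:ℝ) ≤ (n:ℝ) := by exact_mod_cast h2
  have hstep : ((n:ℝ) + 2) ^ 5 ≤ ((n:ℝ)) ^ 6 := by
    calc ((n:ℝ) + 2) ^ 5 ≤ (2 * (n:ℝ)) ^ 5 := by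
          apply pow_le_pow_left₀ (by linarith) (by linarith)
      _ = 32 * ((n:ℝ)) ^ 5 := by ring
      _ ≤ ((n:ℝ)) ^ 6 := by nlinarith [pow_nonneg (by linarith : (0:ℝ) ≤ (n:ℝ)) 5]
  have heq1 : Rsqrt2 * (Rsqrt2 * c) ^ n = Rsqrt2 ^ (n+1) * c ^ n := by
    rw [mul_pow, pow_succ]; ring
  have hkey : ((n:ℝ) + 2) ^ 5 ≤ Rsqrt2 ^ (n+1) * c ^ n := by
    rw [← heq1]; linarith
  calc |kap n| ≤ ((n:ℝ) + 2) ^ 5 * (Rsqrt2⁻¹) ^ (n+1) := hb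
    _ ≤ (Rsqrt2 ^ (n+1) * c ^ n) * (Rsqrt2⁻¹) ^ (n+1) :=
        mul_le_mul_of_nonneg_right hkey (pow_nonneg hRinv_nonneg _)
    _ = c ^ n := by
        rw [inv_pow, mul_comm (Rsqrt2 ^ (n+1)) (c ^ n), mul_assoc,
          mul_inv_cancel₀ (pow_ne_zero _ hRpos.ne'), mul_one]

lemma rpow_le_of_le {n : ℕ} (hn : 1 ≤ n) {a b : ℝ} (ha : 0 ≤ a) (hb : 0 ≤ b)
    (h : a ≤ b ^ n) : a ^ ((n:ℝ)⁻¹) ≤ b := by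
  have hne : ((n:ℝ)) ≠ 0 := by positivity
  have h1 : a ^ ((n:ℝ)⁻¹) ≤ (b ^ n) ^ ((n:ℝ)⁻¹) :=
    Real.rpow_le_rpow ha h (by positivity)
  rwa [← Real.rpow_natCast b n, ← Real.rpow_mul hb, mul_inv_cancel₀ hne, Real.rpow_one] at h1

lemma le_rpow_of_le {n : ℕ} (hn : 1 ≤ n) {a b : ℝ} (hb : 0 ≤ b)
    (h : b ^ n ≤ a) : b ≤ a ^ ((n:ℝ)⁻¹) := by
  have hne : ((n:ℝ)) ≠ 0 := by positivity
  have ha : (0:ℝ) ≤ a := le_trans (pow_nonneg hb n) h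
  have h1 : (b ^ n) ^ ((n:ℝ)⁻¹) ≤ a ^ ((n:ℝ)⁻¹) :=
    Real.rpow_le_rpow (pow_nonneg hb n) h (by positivity)
  rwa [← Real.rpow_natCast b n, ← Real.rpow_mul hb, mul_inv_cancel₀ hne, Real.rpow_one] at h1

lemma main_limsup : limsup (fun n : ℕ => |kap n| ^ ((n:ℝ)⁻¹)) atTop = Rsqrt2⁻¹ := by
  set u := fun n : ℕ => |kap n| ^ ((n:ℝ)⁻¹) with hu
  have hu0 : ∀ n, 0 ≤ u n := fun n => Real.rpow_nonneg (abs_nonneg _) _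
  have hup : ∀ c : ℝ, Rsqrt2⁻¹ < c → ∀ᶠ n in atTop, u n ≤ c := by
    intro c hc
    have hc0 : (0:ℝ) < c := by linarith [hone_le_Rinv]
    filter_upwards [hUp hc, eventually_ge_atTop 1] with n h1 h2
    exact rpow_le_of_le h2 (abs_nonneg _) hc0.le h1
  have hbd : IsBoundedUnder (· ≤ ·) atTop u :=
    isBoundedUnder_of_eventually_le (hup (Rsqrt2⁻¹ + 1) (by linarith))
  have hco : IsCoboundedUnder (· ≤ ·) atTop u :=
    isCoboundedUnder_le_of_le atTop (x := 0) hu0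
  apply le_antisymm
  · by_contra h
    push_neg at h
    have h2 := limsup_le_of_le hco (hup ((Rsqrt2⁻¹ + limsup u atTop)/2) (by linarith))
    linarith
  · have hlow : ∀ c : ℝ, 0 < c → c < Rsqrt2⁻¹ → c ≤ limsup u atTop := by
      intro c hc0 hcR
      apply le_limsup_of_frequently_le ?_ hbd
      have hfreq := not_eventually.mp (no_fast_decay hc0 hcR)
      refine (hfreq.and_eventually (eventually_ge_atTop 1)).mono ?_
      rintro n ⟨h1, h2⟩
      push_neg at h1
      exact le_rpow_of_le h2 hc0.le h1.le
    by_contra h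
    push_neg at h
    have hm0 : (0:ℝ) < Rsqrt2⁻¹ := by linarith [hone_le_Rinv]
    set m := max (limsup u atTop) 0 with hm
    have hmR : m < Rsqrt2⁻¹ := by
      rw [hm]
      apply max_lt h hm0
    have hle := hlow ((m + Rsqrt2⁻¹)/2) (by positivity) (by linarith)
    have : limsup u atTop ≤ m := le_max_left _ _
    linarith

end QD

theorem qSqrtTwoPlusOne_exists_unique_and_radius :
    (∃! f : PowerSeries ℝ,
      PowerSeries.X * f ^ 2 - (PowerSeries.X ^ 3 + 2 * PowerSeries.X - 1) * f - 1 = 0) ∧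
    ∀ f : PowerSeries ℝ,
      PowerSeries.X * f ^ 2 - (PowerSeries.X ^ 3 + 2 * PowerSeries.X - 1) * f - 1 = 0 →
        PowerSeries.coeff 0 f = 1 ∧
        Filter.limsup (fun n : ℕ => |PowerSeries.coeff n f| ^ ((n : ℝ)⁻¹))
          Filter.atTop = Rsqrt2⁻¹ := by
  constructor
  · exact ⟨QD.F, QD.eqn_F, fun y hy => QD.eqn_unique y QD.F hy QD.eqn_F⟩
  · intro f hf
    have hfF : f = QD.F := QD.eqn_unique f QD.F hf QD.eqn_F
    subst hfF
    refine ⟨((QD.eqn_iff QD.F).mp QD.eqn_F).1, ?_⟩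
    have hcoe : (fun n : ℕ => |PowerSeries.coeff n QD.F| ^ ((n:ℝ)⁻¹))
        = fun n : ℕ => |QD.kap n| ^ ((n:ℝ)⁻¹) := by
      funext n
      rw [show PowerSeries.coeff n QD.F = QD.kap n from by simp [QD.F]]
    rw [hcoe]
    exact QD.main_limsup
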